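/- arXiv:1706.02866 — 2 statements merged into one kernel-verified Lean document; each statement's English description precedes it below -/
import Mathlib

section
/- Every morphism of globular sets between pasting schemes is a monomorphism (each component f_n is injective). -/
/-- A globular set: a family of sets `cells n` with source and target maps
satisfying the globular identities. -/
structure GlobSet : Type 1 where
  cells : ℕ → Type
  src : ∀ n, cells (n + 1) → cells n
  tgt : ∀ n, cells (n + 1) → cells n
  src_glob : ∀ n (x : cells (n + 2)), src n (src (n + 1) x) = src n (tgt (n + 1) x)
  tgt_glob : ∀ n (x : cells (n + 2)), tgt n (src (n + 1) x) = tgt n (tgt (n + 1) x)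

/-- The set `G_∞` of all cells of a globular set. -/
def GlobSet.allCells (G : GlobSet) : Type := Σ n, G.cells n

/-- Morphisms of globular sets. -/
@[ext]
structure GlobSet.Hom (G H : GlobSet) where
  app : ∀ n, G.cells n → H.cells n
  app_src : ∀ n (x : G.cells (n + 1)), app n (G.src n x) = H.src n (app (n + 1) x)
  app_tgt : ∀ n (x : G.cells (n + 1)), app n (G.tgt n x) = H.tgt n (app (n + 1) x)

/-- The one-step relation on cells generating `◁`: for every `(n+1)`-cell `x`,
`s_n(x) ◁ x` and `x ◁ t_n(x)`. -/
inductive GlobSet.RelStep (G : GlobSet) : G.allCells → G.allCells → Prop where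
  | src (n : ℕ) (x : G.cells (n + 1)) : G.RelStep ⟨n, G.src n x⟩ ⟨n + 1, x⟩
  | tgt (n : ℕ) (x : G.cells (n + 1)) : G.RelStep ⟨n + 1, x⟩ ⟨n, G.tgt n x⟩

/-- The relation `◁` on the cells of a globular set: the transitive closure of
the relation such that `s_n(x) ◁ x ◁ t_n(x)` for every `(n+1)`-cell `x`. -/
def GlobSet.Before (G : GlobSet) : G.allCells → G.allCells → Prop :=
  Relation.TransGen G.RelStep

/-- A globular set is `◁`-linear when for all cells `x`, `y`:
`x ◁ y` or `y ◁ x`, if and only if `x ≠ y`. -/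
def GlobSet.Linear (G : GlobSet) : Prop :=
  ∀ x y : G.allCells, (G.Before x y ∨ G.Before y x) ↔ x ≠ y 

/-- A pasting scheme: a nonempty finite `◁`-linear globular set. -/
def GlobSet.IsPastingScheme (G : GlobSet) : Prop :=
  Nonempty G.allCells ∧ Finite G.allCells ∧ G.Linear

/-- The map on all cells induced by a morphism. -/
def GlobSet.Hom.mapCell {G H : GlobSet} (f : GlobSet.Hom G H) (x : G.allCells) :
    H.allCells := ⟨x.1, f.app x.1 x.2⟩

lemma GlobSet.Hom.mapCell_relStep {G H : GlobSet} (f : GlobSet.Hom G H)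
    {x y : G.allCells} (h : G.RelStep x y) : H.RelStep (f.mapCell x) (f.mapCell y) := by
  cases h with
  | src n x => simpa [GlobSet.Hom.mapCell, f.app_src] using GlobSet.RelStep.src n (f.app _ x)
  | tgt n x => simpa [GlobSet.Hom.mapCell, f.app_tgt] using GlobSet.RelStep.tgt n (f.app _ x)

lemma GlobSet.Hom.mapCell_before {G H : GlobSet} (f : GlobSet.Hom G H)
    {x y : G.allCells} (h : G.Before x y) : H.Before (f.mapCell x) (f.mapCell y) := by
  induction h with
  | single h => exact Relation.TransGen.single (f.mapCell_relStep h)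
  | tail _ h ih => exact Relation.TransGen.tail ih (f.mapCell_relStep h)

/-- Every morphism of globular sets between pasting schemes is a monomorphism:
each component `f_n` is injective. -/
theorem hom_between_pasting_schemes_mono (G H : GlobSet)
    (hG : G.IsPastingScheme) (hH : H.IsPastingScheme)
    (f : GlobSet.Hom G H) (n : ℕ) :
    Function.Injective (f.app n) := by
  intro x y hxy
  by_contra hne
  have hne' : (⟨n, x⟩ : G.allCells) ≠ ⟨n, y⟩ := by
    intro h
    injection h with h1 h2
    exact hne h2
  have hb := (hG.2.2 ⟨n, x⟩ ⟨n, y⟩).mpr hne'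
  have heq : f.mapCell ⟨n, x⟩ = f.mapCell ⟨n, y⟩ := by
    simp [GlobSet.Hom.mapCell, hxy]
    rfl
  cases hb with
  | inl h =>
    have hb' := f.mapCell_before h
    rw [← heq] at hb'
    exact (hH.2.2 _ _).mp (Or.inl hb') rfl
  | inr h =>
    have hb' := f.mapCell_before h
    rw [heq] at hb'
    exact (hH.2.2 _ _).mp (Or.inl hb') rfl
end

section
/- The only automorphism of a pasting scheme is the identity: every isomorphism of globular sets f : G → G with G a pasting scheme satisfies f = id_G. -/
/-- Identity morphism of globular sets. -/
def GlobSet.Hom.id (G : GlobSet) : GlobSet.Hom G G :=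
  ⟨fun _ x => x, fun _ _ => rfl, fun _ _ => rfl⟩

/-- Composition of morphisms of globular sets. -/
def GlobSet.Hom.comp {G H K : GlobSet} (f : GlobSet.Hom G H) (g : GlobSet.Hom H K) :
    GlobSet.Hom G K :=
  ⟨fun n x => g.app n (f.app n x),
    fun n x => by simp only [f.app_src, g.app_src],
    fun n x => by simp only [f.app_tgt, g.app_tgt]⟩


/-- The only automorphism of a pasting scheme is the identity: every
isomorphism of globular sets `f : G → G` (a morphism admitting a two-sided
inverse) with `G` a pasting scheme is the identity. -/
theorem pasting_scheme_automorphism_id (G : GlobSet) (hG : G.IsPastingScheme)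
    (f : GlobSet.Hom G G) (hf : ∃ g : GlobSet.Hom G G,
      f.comp g = GlobSet.Hom.id G ∧ g.comp f = GlobSet.Hom.id G) :
    f = GlobSet.Hom.id G := by
  obtain ⟨g, hfg, hgf⟩ := hf
  obtain ⟨-, hFin, hLin⟩ := hG
  -- the induced map on all cells
  let F : G.allCells → G.allCells := fun x => ⟨x.1, f.app x.1 x.2⟩
  let Fg : G.allCells → G.allCells := fun x => ⟨x.1, g.app x.1 x.2⟩
  have hF : ∀ x y, G.RelStep x y → G.RelStep (F x) (F y) := by
    intro x y h
    cases h with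
    | src n x => simpa [F, f.app_src] using GlobSet.RelStep.src n (f.app (n+1) x)
    | tgt n x => simpa [F, f.app_tgt] using GlobSet.RelStep.tgt n (f.app (n+1) x)
  have hFg : ∀ x y, G.RelStep x y → G.RelStep (Fg x) (Fg y) := by
    intro x y h
    cases h with
    | src n x => simpa [Fg, g.app_src] using GlobSet.RelStep.src n (g.app (n+1) x)
    | tgt n x => simpa [Fg, g.app_tgt] using GlobSet.RelStep.tgt n (g.app (n+1) x)
  have hFb : ∀ x y, G.Before x y → G.Before (F x) (F y) := fun x y h =>
    Relation.TransGen.lift F (fun a b => hF a b) x y h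
  have hFgb : ∀ x y, G.Before x y → G.Before (Fg x) (Fg y) := fun x y h =>
    Relation.TransGen.lift Fg (fun a b => hFg a b) x y h
  have hirr : ∀ x : G.allCells, ¬ G.Before x x := fun x h =>
    (hLin x x).mp (Or.inl h) rfl
  have htrans : ∀ x y z : G.allCells, G.Before x y → G.Before y z → G.Before x z :=
    fun _ _ _ h h' => Relation.TransGen.trans h h'
  haveI : IsTrans G.allCells G.Before := ⟨htrans⟩
  haveI : IsIrrefl G.allCells G.Before := ⟨hirr⟩
  have hwf : WellFounded G.Before := Finite.wellFounded_of_trans_of_irrefl _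
  -- no cell x with F x ◁ x
  have key : ∀ (F' : G.allCells → G.allCells)
      (hF' : ∀ x y, G.Before x y → G.Before (F' x) (F' y)),
      ∀ x, ¬ G.Before (F' x) x := by
    intro F' hF' x
    induction x using hwf.induction with
    | _ x ih =>
      intro h
      exact ih (F' x) h (hF' _ _ h)
  -- F x = x for every cell
  have hFx : ∀ x : G.allCells, F x = x := by
    intro x
    by_contra hne
    rcases (hLin (F x) x).mpr hne with h | h
    · exact key F hFb x h
    · have h2 := hFgb _ _ h
      have hid : Fg (F x) = x := by
        have h3 : g.app x.1 (f.app x.1 x.2) = x.2 := by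
          have := congrArg (fun h => GlobSet.Hom.app h x.1 x.2) hfg
          simpa [GlobSet.Hom.comp, GlobSet.Hom.id] using this
        simp [F, Fg, h3]; rfl
      rw [hid] at h2
      exact key Fg hFgb x h2
  ext n x
  · have h : (⟨n, f.app n x⟩ : Σ m, G.cells m) = ⟨n, x⟩ := hFx ⟨n, x⟩
    rw [Sigma.mk.inj_iff] at h
    exact eq_of_heq h.2
end
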